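/- Let R₁ be a finite integral domain and R₂ a finite local principal ideal ring with diam(Γ(R₂)) = 2, with Z(R₂) = yR₂ where y^l = 0 and y^{l-1} ≠ 0. Then the complement of the zero-divisor graph of R₁ × R₂ is a divisor graph. -/

import Mathlib

/-- A finite simple graph is a *divisor graph* if there is an injection from its
vertices to the positive integers such that distinct vertices are adjacent iff
one label divides the other. -/
def IsDivisorGraph {V : Type*} (G : SimpleGraph V) : Prop :=
  ∃ f : V → ℕ, Function.Injective f ∧ (∀ v, 0 < f v) ∧
    ∀ u v : V, u ≠ v → (G.Adj u v ↔ f u ∣ f v ∨ f v ∣ f u)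

/-- The vertex set of the zero-divisor graph: nonzero zero-divisors of `R`. -/
abbrev ZDVertex (R : Type*) [CommRing R] : Type _ :=
  {a : R // a ≠ 0 ∧ ∃ b : R, b ≠ 0 ∧ a * b = 0}

/-- The zero-divisor graph `Γ(R)`. -/
def zeroDivisorGraph (R : Type*) [CommRing R] : SimpleGraph (ZDVertex R) where
  Adj x y := x ≠ y ∧ x.val * y.val = 0
  symm := ⟨fun x y ⟨h1, h2⟩ => ⟨h1.symm, by rwa [mul_comm]⟩⟩
  loopless := ⟨fun x ⟨h, _⟩ => h rfl⟩

/-- The complement of the zero-divisor graph `Γ(R)̄`. -/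
def compZDGraph (R : Type*) [CommRing R] : SimpleGraph (ZDVertex R) where
  Adj x y := x ≠ y ∧ x.val * y.val ≠ 0
  symm := ⟨fun x y ⟨h1, h2⟩ => ⟨h1.symm, by rwa [mul_comm]⟩⟩
  loopless := ⟨fun x ⟨h, _⟩ => h rfl⟩


private def Flab (a b e : ℕ) : ℕ := 2 ^ a * 3 ^ b * 5 ^ e

private lemma Flab_pos (a b e : ℕ) : 0 < Flab a b e := by unfold Flab; positivity

private lemma Flab_dvd {a b e a' b' e' : ℕ} :
    Flab a b e ∣ Flab a' b' e' ↔ a ≤ a' ∧ b ≤ b' ∧ e ≤ e' := by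
  constructor
  · intro h
    refine ⟨?_, ?_, ?_⟩
    · have hd : (2:ℕ)^a ∣ Flab a' b' e' :=
        (show (2:ℕ)^a ∣ Flab a b e from ⟨3^b*5^e, by unfold Flab; ring⟩).trans h
      rw [show Flab a' b' e' = 2^a' * (3^b'*5^e') from by unfold Flab; ring] at hd
      have hc : Nat.Coprime (2^a) (3^b'*5^e') :=
        Nat.Coprime.mul_right (Nat.Coprime.pow _ _ (by decide)) (Nat.Coprime.pow _ _ (by decide))
      exact (Nat.pow_dvd_pow_iff_le_right (by norm_num)).mp (hc.dvd_of_dvd_mul_right hd)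
    · have hd : (3:ℕ)^b ∣ Flab a' b' e' :=
        (show (3:ℕ)^b ∣ Flab a b e from ⟨2^a*5^e, by unfold Flab; ring⟩).trans h
      rw [show Flab a' b' e' = 3^b' * (2^a'*5^e') from by unfold Flab; ring] at hd
      have hc : Nat.Coprime (3^b) (2^a'*5^e') :=
        Nat.Coprime.mul_right (Nat.Coprime.pow _ _ (by decide)) (Nat.Coprime.pow _ _ (by decide))
      exact (Nat.pow_dvd_pow_iff_le_right (by norm_num)).mp (hc.dvd_of_dvd_mul_right hd)
    · have hd : (5:ℕ)^e ∣ Flab a' b' e' :=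
        (show (5:ℕ)^e ∣ Flab a b e from ⟨2^a*3^b, by unfold Flab; ring⟩).trans h
      rw [show Flab a' b' e' = 5^e' * (2^a'*3^b') from by unfold Flab; ring] at hd
      have hc : Nat.Coprime (5^e) (2^a'*3^b') :=
        Nat.Coprime.mul_right (Nat.Coprime.pow _ _ (by decide)) (Nat.Coprime.pow _ _ (by decide))
      exact (Nat.pow_dvd_pow_iff_le_right (by norm_num)).mp (hc.dvd_of_dvd_mul_right hd)
  · rintro ⟨h1, h2, h3⟩
    exact mul_dvd_mul (mul_dvd_mul (pow_dvd_pow _ h1) (pow_dvd_pow _ h2)) (pow_dvd_pow _ h3)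

private lemma Flab_inj {a b e a' b' e' : ℕ} (h : Flab a b e = Flab a' b' e') :
    a = a' ∧ b = b' ∧ e = e' := by
  have h1 := Flab_dvd.mp h.dvd
  have h2 := Flab_dvd.mp h.symm.dvd
  exact ⟨le_antisymm h1.1 h2.1, le_antisymm h1.2.1 h2.2.1, le_antisymm h1.2.2 h2.2.2⟩

private lemma block_le {N p q i j : ℕ} (hi : i < N) (hj : j < N) :
    p * N + i ≤ q * N + j ↔ p < q ∨ (p = q ∧ i ≤ j) := by
  constructor
  · intro h
    rcases lt_trichotomy p q with hpq | hpq | hpq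
    · exact Or.inl hpq
    · subst hpq; exact Or.inr ⟨rfl, by omega⟩
    · exfalso
      have h2 : (q+1) * N ≤ p * N := Nat.mul_le_mul_right N hpq
      rw [add_mul, one_mul] at h2
      omega
  · rintro (hpq | ⟨rfl, hij⟩)
    · have h2 : (p+1) * N ≤ q * N := Nat.mul_le_mul_right N hpq
      rw [add_mul, one_mul] at h2
      omega
    · omega

private lemma block_inj {N p q i j : ℕ} (hi : i < N) (hj : j < N)
    (h : p * N + i = q * N + j) : i = j := by
  have h' : (p * N + i) % N = (q * N + j) % N := congrArg (· % N) h
  rw [mul_comm p N, mul_comm q N, Nat.mul_add_mod, Nat.mul_add_mod,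
    Nat.mod_eq_of_lt hi, Nat.mod_eq_of_lt hj] at h'
  exact h'

private lemma nonunit_exists {R : Type*} [CommRing R] [Fintype R] [Nontrivial R]
    (r : R) (hr : ¬ IsUnit r) : ∃ b : R, b ≠ 0 ∧ r * b = 0 := by
  by_contra hc
  push_neg at hc
  have hinj : Function.Injective (fun c : R => r * c) := by
    intro c₁ c₂ h12
    by_contra hne
    simp only at h12
    exact hc (c₁ - c₂) (sub_ne_zero.mpr hne) (by rw [mul_sub, h12, sub_self])
  obtain ⟨s, hs⟩ := (Finite.injective_iff_surjective.mp hinj) 1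
  exact hr (IsUnit.of_mul_eq_one s hs)

private lemma divisor_of_structure {V : Type*} (G : SimpleGraph V) (l C : ℕ) (hl1 : 1 ≤ l)
    (t : V → Prop) (s ι : V → ℕ)
    (hι : ∀ x y : V, ι x = ι y → x = y) (hιC : ∀ x, ι x ≤ C)
    (hA : ∀ x, t x → 1 ≤ s x ∧ s x ≤ l)
    (hB : ∀ x, ¬ t x → s x < l)
    (hadj : ∀ u w, u ≠ w → (G.Adj u w ↔ (t u ∧ t w) ∨ s u + s w < l)) :
    IsDivisorGraph G := by
  classical
  set N := C + 1 with hN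
  have hiN : ∀ x, ι x < N := fun x => by have := hιC x; omega
  set off : V → ℕ := fun x => if 2 * s x < l then ι x else C - ι x with hoffdef
  have hoffN : ∀ x, off x < N := fun x => by
    rw [hoffdef]; dsimp only; split <;> [exact hiN x; omega]
  set f : V → ℕ := fun x =>
    if t x then Flab (2*(l - s x) * N + ι x) ((2*l + (l - s x)) * N + ι x) 1
    else Flab ((2 * s x + 1) * N + ι x) (min (2 * s x) (2*(l - s x) - 1) * N + off x) 0
    with hfdef
  have hfA : ∀ x, t x → f x = Flab (2*(l - s x) * N + ι x) ((2*l + (l - s x)) * N + ι x) 1 :=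
    fun x hx => by rw [hfdef]; exact if_pos hx
  have hfB : ∀ x, ¬ t x →
      f x = Flab ((2 * s x + 1) * N + ι x) (min (2 * s x) (2*(l - s x) - 1) * N + off x) 0 :=
    fun x hx => by rw [hfdef]; exact if_neg hx
  refine ⟨f, ?_, ?_, ?_⟩
  · -- injectivity
    intro x z hxz
    by_cases hx : t x <;> by_cases hz : t z
    · rw [hfA x hx, hfA z hz] at hxz
      exact hι x z (block_inj (hiN x) (hiN z) (Flab_inj hxz).1)
    · rw [hfA x hx, hfB z hz] at hxz
      exact absurd (Flab_inj hxz).2.2 (by omega)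
    · rw [hfB x hx, hfA z hz] at hxz
      exact absurd (Flab_inj hxz).2.2 (by omega)
    · rw [hfB x hx, hfB z hz] at hxz
      exact hι x z (block_inj (hiN x) (hiN z) (Flab_inj hxz).1)
  · -- positivity
    intro x
    by_cases hx : t x
    · rw [hfA x hx]; exact Flab_pos _ _ _
    · rw [hfB x hx]; exact Flab_pos _ _ _
  · -- adjacency
    intro u w huw
    rw [hadj u w huw]
    have hιuw : ι u ≠ ι w := fun h => huw (hι _ _ h)
    by_cases hu : t u <;> by_cases hw : t w
    · -- A A
      obtain ⟨hu1, hu2⟩ := hA u hu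
      obtain ⟨hw1, hw2⟩ := hA w hw
      rw [hfA u hu, hfA w hw]
      refine iff_of_true (Or.inl ⟨hu, hw⟩) ?_
      rcases lt_trichotomy (s u) (s w) with hc | hc | hc
      · exact Or.inr (Flab_dvd.mpr ⟨(block_le (hiN w) (hiN u)).mpr (Or.inl (by omega)),
          (block_le (hiN w) (hiN u)).mpr (Or.inl (by omega)), le_rfl⟩)
      · rcases le_total (ι u) (ι w) with hio | hio
        · exact Or.inl (Flab_dvd.mpr ⟨(block_le (hiN u) (hiN w)).mpr (Or.inr ⟨by omega, hio⟩),
            (block_le (hiN u) (hiN w)).mpr (Or.inr ⟨by omega, hio⟩), le_rfl⟩)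
        · exact Or.inr (Flab_dvd.mpr ⟨(block_le (hiN w) (hiN u)).mpr (Or.inr ⟨by omega, hio⟩),
            (block_le (hiN w) (hiN u)).mpr (Or.inr ⟨by omega, hio⟩), le_rfl⟩)
      · exact Or.inl (Flab_dvd.mpr ⟨(block_le (hiN u) (hiN w)).mpr (Or.inl (by omega)),
          (block_le (hiN u) (hiN w)).mpr (Or.inl (by omega)), le_rfl⟩)
    · -- A B
      obtain ⟨hu1, hu2⟩ := hA u hu
      have hw1 := hB w hw
      rw [hfA u hu, hfB w hw]
      constructor
      · intro h
        have hsl : s u + s w < l := by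
          rcases h with ⟨-, htw⟩ | h
          · exact absurd htw hw
          · exact h
        exact Or.inr (Flab_dvd.mpr ⟨(block_le (hiN w) (hiN u)).mpr (Or.inl (by omega)),
          (block_le (hoffN w) (hiN u)).mpr (Or.inl (by omega)), by omega⟩)
      · rintro (h | h)
        · obtain ⟨-, -, h10⟩ := Flab_dvd.mp h
          omega
        · obtain ⟨ha, -, -⟩ := Flab_dvd.mp h
          have ha' := (block_le (hiN w) (hiN u)).mp ha
          have ha'' : 2 * s w + 1 < 2*(l - s u) ∨ 2 * s w + 1 = 2*(l - s u) := by tauto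
          exact Or.inr (by omega)
    · -- B A
      obtain ⟨hw1, hw2⟩ := hA w hw
      have hu1 := hB u hu
      rw [hfB u hu, hfA w hw]
      constructor
      · intro h
        have hsl : s u + s w < l := by
          rcases h with ⟨htu, -⟩ | h
          · exact absurd htu hu
          · exact h
        exact Or.inl (Flab_dvd.mpr ⟨(block_le (hiN u) (hiN w)).mpr (Or.inl (by omega)),
          (block_le (hoffN u) (hiN w)).mpr (Or.inl (by omega)), by omega⟩)
      · rintro (h | h)
        · obtain ⟨ha, -, -⟩ := Flab_dvd.mp h
          have ha' := (block_le (hiN u) (hiN w)).mp ha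
          have ha'' : 2 * s u + 1 < 2*(l - s w) ∨ 2 * s u + 1 = 2*(l - s w) := by tauto
          exact Or.inr (by omega)
        · obtain ⟨-, -, h10⟩ := Flab_dvd.mp h
          omega
    · -- B B
      have hu1 := hB u hu
      have hw1 := hB w hw
      rw [hfB u hu, hfB w hw]
      constructor
      · intro h
        have hsl : s u + s w < l := by
          rcases h with ⟨htu, -⟩ | h
          · exact absurd htu hu
          · exact h
        rcases lt_trichotomy (s u) (s w) with hc | hc | hc
        · exact Or.inl (Flab_dvd.mpr ⟨(block_le (hiN u) (hiN w)).mpr (Or.inl (by omega)),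
            (block_le (hoffN u) (hoffN w)).mpr (Or.inl (by omega)), le_rfl⟩)
        · have h2 : 2 * s u < l := by omega
          have hou : off u = ι u := by rw [hoffdef]; exact if_pos h2
          have how : off w = ι w := by rw [hoffdef]; dsimp only; rw [if_pos (by omega)]
          rcases le_total (ι u) (ι w) with hio | hio
          · exact Or.inl (Flab_dvd.mpr ⟨(block_le (hiN u) (hiN w)).mpr (Or.inr ⟨by omega, hio⟩),
              (block_le (hoffN u) (hoffN w)).mpr (Or.inr ⟨by omega, by rw [hou, how]; exact hio⟩),
              le_rfl⟩)
          · exact Or.inr (Flab_dvd.mpr ⟨(block_le (hiN w) (hiN u)).mpr (Or.inr ⟨by omega, hio⟩),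
              (block_le (hoffN w) (hoffN u)).mpr (Or.inr ⟨by omega, by rw [hou, how]; exact hio⟩),
              le_rfl⟩)
        · exact Or.inr (Flab_dvd.mpr ⟨(block_le (hiN w) (hiN u)).mpr (Or.inl (by omega)),
            (block_le (hoffN w) (hoffN u)).mpr (Or.inl (by omega)), le_rfl⟩)
      · rintro (h | h)
        · obtain ⟨ha, hb, -⟩ := Flab_dvd.mp h
          have ha' := (block_le (hiN u) (hiN w)).mp ha
          have hb' := (block_le (hoffN u) (hoffN w)).mp hb
          refine Or.inr ?_
          rcases lt_trichotomy (s u) (s w) with hc | hc | hc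
          · have hb'' : min (2 * s u) (2*(l - s u) - 1) < min (2 * s w) (2*(l - s w) - 1) ∨
                min (2 * s u) (2*(l - s u) - 1) = min (2 * s w) (2*(l - s w) - 1) := by tauto
            omega
          · by_contra hcon
            have h2 : ¬ (2 * s u < l) := by omega
            have hou : off u = C - ι u := by rw [hoffdef]; exact if_neg h2
            have how : off w = C - ι w := by rw [hoffdef]; dsimp only; rw [if_neg (by omega)]
            have hia : ι u ≤ ι w := by
              rcases ha' with h' | ⟨-, h'⟩
              · omega
              · exact h'
            have hib : C - ι u ≤ C - ι w := by
              rcases hb' with h' | ⟨-, h'⟩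
              · omega
              · rw [hou, how] at h'; exact h'
            have := hιC u
            have := hιC w
            omega
          · have ha'' : 2 * s u + 1 < 2 * s w + 1 ∨ 2 * s u + 1 = 2 * s w + 1 := by tauto
            omega
        · obtain ⟨ha, hb, -⟩ := Flab_dvd.mp h
          have ha' := (block_le (hiN w) (hiN u)).mp ha
          have hb' := (block_le (hoffN w) (hoffN u)).mp hb
          refine Or.inr ?_
          rcases lt_trichotomy (s w) (s u) with hc | hc | hc
          · have hb'' : min (2 * s w) (2*(l - s w) - 1) < min (2 * s u) (2*(l - s u) - 1) ∨
                min (2 * s w) (2*(l - s w) - 1) = min (2 * s u) (2*(l - s u) - 1) := by tauto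
            omega
          · by_contra hcon
            have h2 : ¬ (2 * s w < l) := by omega
            have how : off w = C - ι w := by rw [hoffdef]; exact if_neg h2
            have hou : off u = C - ι u := by rw [hoffdef]; dsimp only; rw [if_neg (by omega)]
            have hia : ι w ≤ ι u := by
              rcases ha' with h' | ⟨-, h'⟩
              · omega
              · exact h'
            have hib : C - ι w ≤ C - ι u := by
              rcases hb' with h' | ⟨-, h'⟩
              · omega
              · rw [hou, how] at h'; exact h'
            have := hιC u
            have := hιC w
            omega
          · have ha'' : 2 * s w + 1 < 2 * s u + 1 ∨ 2 * s w + 1 = 2 * s u + 1 := by tauto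
            omega

theorem compZDGraph_prod_domain_diamTwo (R₁ R₂ : Type*) [CommRing R₁] [IsDomain R₁]
    [Fintype R₁] [CommRing R₂] [Fintype R₂] [IsLocalRing R₂] [IsPrincipalIdealRing R₂]
    (y : R₂) (l : ℕ)
    (hdiam : (zeroDivisorGraph R₂).diam = 2)
    (hZ : {x : R₂ | ∃ b : R₂, b ≠ 0 ∧ x * b = 0} = {x : R₂ | ∃ r : R₂, x = y * r})
    (hl : y ^ l = 0) (hl' : y ^ (l - 1) ≠ 0) :
    IsDivisorGraph (compZDGraph (R₁ × R₂)) := by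
  rcases Nat.eq_zero_or_pos l with rfl | hl1
  · rw [pow_zero] at hl
    exact absurd (by rw [Nat.zero_sub, pow_zero]; exact hl) hl'
  classical
  set v : R₂ → ℕ := fun b => Nat.findGreatest (fun k => ∃ r, b = y ^ k * r) l with hvdef
  have hP0 : ∀ b : R₂, ∃ r, b = y ^ 0 * r := fun b => ⟨b, by simp⟩
  have hvle : ∀ b : R₂, v b ≤ l := fun b => Nat.findGreatest_le l
  have hvspec : ∀ b : R₂, ∃ r, b = y ^ (v b) * r :=
    fun b => Nat.findGreatest_spec (P := fun k => ∃ r, b = y ^ k * r) (Nat.zero_le l) (hP0 b)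
  have hpow : ∀ k, y ^ k = 0 ↔ l ≤ k := by
    intro k
    constructor
    · intro h
      by_contra hk
      push_neg at hk
      apply hl'
      have h2 : y ^ (l-1) = y ^ k * y ^ (l-1-k) := by rw [← pow_add]; congr 1; omega
      rw [h2, h, zero_mul]
    · intro h
      have h2 : y ^ k = y ^ l * y ^ (k-l) := by rw [← pow_add]; congr 1; omega
      rw [h2, hl, zero_mul]
  have hvlt : ∀ b : R₂, b ≠ 0 → v b < l := by
    intro b hb
    rcases (hvle b).lt_or_eq with h | h
    · exact h
    · obtain ⟨r, hr⟩ := hvspec b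
      rw [h, hl, zero_mul] at hr
      exact absurd hr hb
  have hnon : ∀ r : R₂, ¬ IsUnit r → ∃ s, r = y * s := by
    intro r hr
    have hz : r ∈ {x : R₂ | ∃ b : R₂, b ≠ 0 ∧ x * b = 0} := nonunit_exists r hr
    rw [hZ] at hz
    exact hz
  have hdecomp : ∀ b : R₂, ∃ u : R₂, IsUnit u ∧ b = y ^ (v b) * u := by
    intro b
    rcases eq_or_ne b 0 with rfl | hb0
    · have hvl : v (0:R₂) = l :=
        le_antisymm (hvle 0) (Nat.le_findGreatest le_rfl ⟨1, by rw [hl, zero_mul]⟩)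
      exact ⟨1, isUnit_one, by rw [hvl, hl, zero_mul]⟩
    · obtain ⟨r, hr⟩ := hvspec b
      have hvb : v b < l := hvlt b hb0
      have hu : IsUnit r := by
        by_contra hru
        obtain ⟨s, hs⟩ := hnon r hru
        have hP : ∃ r', b = y ^ (v b + 1) * r' :=
          ⟨s, by nth_rewrite 1 [hr]; rw [hs, pow_succ]; ring⟩
        exact Nat.findGreatest_is_greatest (P := fun k => ∃ r, b = y ^ k * r) (n := l)
          (k := v b + 1) (Nat.lt_succ_self (v b)) (by omega) hP
      exact ⟨r, hu, hr⟩
  have hmulz : ∀ b c : R₂, b * c = 0 ↔ l ≤ v b + v c := by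
    intro b c
    obtain ⟨u, hu, hbu⟩ := hdecomp b
    obtain ⟨u', hu', hcu⟩ := hdecomp c
    have key : b * c = y ^ (v b + v c) * (u * u') := by
      conv_lhs => rw [hbu, hcu]
      rw [pow_add]; ring
    rw [key, (hu.mul hu').mul_left_eq_zero]
    exact hpow _
  refine divisor_of_structure (compZDGraph (R₁ × R₂)) l (Fintype.card (R₁ × R₂)) hl1
    (fun x => x.val.1 ≠ 0) (fun x => v x.val.2)
    (fun x => ((Fintype.equivFin (R₁ × R₂)) x.val : ℕ)) ?_ ?_ ?_ ?_ ?_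
  · intro x z h
    exact Subtype.ext ((Fintype.equivFin (R₁ × R₂)).injective (Fin.ext h))
  · intro x
    exact le_of_lt (Fin.is_lt _)
  · -- type A bounds
    intro x hx
    show 1 ≤ v x.val.2 ∧ v x.val.2 ≤ l
    refine ⟨?_, hvle _⟩
    obtain ⟨hx0, q, hq0, hqm⟩ := x.property
    have h1 : x.val.1 * q.1 = 0 := congrArg Prod.fst hqm
    have h2 : x.val.2 * q.2 = 0 := congrArg Prod.snd hqm
    have hq1 : q.1 = 0 := by
      rcases mul_eq_zero.mp h1 with h | h
      · exact absurd h hx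
      · exact h
    have hq2 : q.2 ≠ 0 := fun h => hq0 (Prod.ext_iff.mpr ⟨hq1, h⟩)
    have hle := (hmulz _ _).mp h2
    have hlt := hvlt _ hq2
    omega
  · -- type B bound
    intro x hx
    rw [not_not] at hx
    apply hvlt
    intro h2
    exact x.property.1 (Prod.ext_iff.mpr ⟨hx, h2⟩)
  · -- adjacency
    intro u w huw
    show (compZDGraph (R₁ × R₂)).Adj u w ↔
      ((u.val.1 ≠ 0 ∧ w.val.1 ≠ 0) ∨ v u.val.2 + v w.val.2 < l)
    have hiff : ∀ p q : R₁ × R₂, p * q = 0 ↔ ((p.1 = 0 ∨ q.1 = 0) ∧ l ≤ v p.2 + v q.2) := by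
      intro p q
      have h0 : p * q = 0 ↔ (p.1 * q.1 = 0 ∧ p.2 * q.2 = 0) := Prod.ext_iff
      rw [h0, mul_eq_zero, hmulz]
    constructor
    · intro hadj0
      have h2 : u ≠ w ∧ u.val * w.val ≠ 0 := hadj0
      have h3 := h2.2
      rw [Ne, hiff] at h3
      by_cases hc : u.val.1 = 0 ∨ w.val.1 = 0
      · have h4 : ¬ (l ≤ v u.val.2 + v w.val.2) := fun hle => h3 ⟨hc, hle⟩
        exact Or.inr (by omega)
      · push_neg at hc
        exact Or.inl hc
    · intro h
      have h'' : u.val * w.val ≠ 0 := by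
        rw [Ne, hiff]
        rintro ⟨hor, hle⟩
        rcases h with ⟨h1, h2⟩ | h3
        · rcases hor with hh | hh
          · exact h1 hh
          · exact h2 hh
        · omega
      exact ⟨huw, h''⟩
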